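/- On a probability space, let (Y_i)_{i ∈ ℕ} be independent and identically distributed Bernoulli random variables with success probability p₀ ∈ (0,1). For each N ∈ ℕ and each i ≤ N let b_{N,i} : Ω → {0,1} be random pending-status indicators satisfying (1/N)·Σ_{i≤N} (1 − b_{N,i}) → 0 almost surely, and let ρ_{N,i} ∈ [0,1] be constants. Define the random survival likelihood L_N(p) = ∏_{i≤N} [ p^{Y_i} (1−p)^{1−Y_i} ]^{b_{N,i}} · (1 − ρ_{N,i} p)^{1 − b_{N,i}} for p ∈ [0,1]. Then almost surely, every sequence (p̂_N) in [0,1] with L_N(p̂_N) = sup_{p ∈ [0,1]} L_N(p) for all N converges to p₀. -/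

import Mathlib

open MeasureTheory Filter


lemma gibbs_aux {p₀ q : ℝ} (hp : p₀ ∈ Set.Ioo (0:ℝ) 1) (hq : q ∈ Set.Ioo (0:ℝ) 1) (hne : q ≠ p₀) :
    p₀ * (Real.log q - Real.log p₀) + (1 - p₀) * (Real.log (1-q) - Real.log (1-p₀)) < 0 := by
  obtain ⟨hp0, hp1⟩ := hp
  obtain ⟨hq0, hq1⟩ := hq
  have h1p : (0:ℝ) < 1 - p₀ := by linarith
  have h1q : (0:ℝ) < 1 - q := by linarith
  have hx : q / p₀ ∈ Set.Ioi (0:ℝ) := div_pos hq0 hp0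
  have hy : (1-q)/(1-p₀) ∈ Set.Ioi (0:ℝ) := div_pos h1q h1p
  have hxy : q / p₀ ≠ (1-q)/(1-p₀) := by
    intro h
    rw [div_eq_div_iff (ne_of_gt hp0) (ne_of_gt h1p)] at h
    apply hne; nlinarith
  have := strictConcaveOn_log_Ioi.2 hx hy hxy hp0 h1p (by ring)
  have hcomb : p₀ • (q / p₀) + (1 - p₀) • ((1-q)/(1-p₀)) = 1 := by
    simp only [smul_eq_mul]
    field_simp
    ring
  rw [hcomb, Real.log_one] at this
  have e1 : Real.log (q / p₀) = Real.log q - Real.log p₀ :=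
    Real.log_div (ne_of_gt hq0) (ne_of_gt hp0)
  have e2 : Real.log ((1-q)/(1-p₀)) = Real.log (1-q) - Real.log (1-p₀) :=
    Real.log_div (ne_of_gt h1q) (ne_of_gt h1p)
  rw [e1, e2] at this
  simpa using this

lemma prod_logconcave {N : ℕ} (g : Fin N → ℝ → ℝ)
    (haff : ∀ i (x y t : ℝ), g i (t*x + (1-t)*y) = t * g i x + (1-t) * g i y)
    (hnn : ∀ i p, p ∈ Set.Icc (0:ℝ) 1 → 0 ≤ g i p)
    {x y t : ℝ} (hx : x ∈ Set.Icc (0:ℝ) 1) (hy : y ∈ Set.Icc (0:ℝ) 1)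
    (ht : t ∈ Set.Icc (0:ℝ) 1) :
    (∏ i, g i x) ^ t * (∏ i, g i y) ^ (1-t) ≤ ∏ i, g i (t*x + (1-t)*y) := by
  have h1 : ∀ i : Fin N, g i x ^ t * g i y ^ (1-t) ≤ g i (t*x + (1-t)*y) := by
    intro i
    rw [haff]
    exact Real.geom_mean_le_arith_mean2_weighted ht.1 (by linarith [ht.2]) (hnn i x hx)
      (hnn i y hy) (by ring)
  calc (∏ i, g i x) ^ t * (∏ i, g i y) ^ (1-t)
      = ∏ i : Fin N, g i x ^ t * g i y ^ (1-t) := by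
        rw [Finset.prod_mul_distrib, Real.finset_prod_rpow _ _ (fun i _ => hnn i x hx),
          Real.finset_prod_rpow _ _ (fun i _ => hnn i y hy)]
    _ ≤ ∏ i, g i (t*x + (1-t)*y) :=
        Finset.prod_le_prod (fun i _ => mul_nonneg (Real.rpow_nonneg (hnn i x hx) _)
          (Real.rpow_nonneg (hnn i y hy) _)) (fun i _ => h1 i)

lemma maximizer_between {N : ℕ} (g : Fin N → ℝ → ℝ)
    (haff : ∀ i (x y t : ℝ), g i (t*x + (1-t)*y) = t * g i x + (1-t) * g i y)
    (hnn : ∀ i p, p ∈ Set.Icc (0:ℝ) 1 → 0 ≤ g i p)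
    {p₀ ph t : ℝ} (hp₀ : p₀ ∈ Set.Icc (0:ℝ) 1) (hph : ph ∈ Set.Icc (0:ℝ) 1)
    (ht : t ∈ Set.Icc (0:ℝ) 1)
    (hpos : 0 < ∏ i, g i p₀) (hmax : ∏ i, g i p₀ ≤ ∏ i, g i ph) :
    ∏ i, g i p₀ ≤ ∏ i, g i (t*p₀ + (1-t)*ph) := by
  have h1 := prod_logconcave g haff hnn hp₀ hph ht
  have h2 : (∏ i, g i p₀) ^ t * (∏ i, g i p₀) ^ (1-t)
      ≤ (∏ i, g i p₀) ^ t * (∏ i, g i ph) ^ (1-t) :=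
    mul_le_mul_of_nonneg_left (Real.rpow_le_rpow (le_of_lt hpos) hmax (by linarith [ht.2]))
      (Real.rpow_nonneg (le_of_lt hpos) _)
  have h3 : (∏ i, g i p₀) ^ t * (∏ i, g i p₀) ^ (1-t) = ∏ i, g i p₀ := by
    rw [← Real.rpow_add hpos]; simp
  linarith


set_option maxHeartbeats 2000000 in
lemma det_consistency {p₀ : ℝ} (hp₀ : p₀ ∈ Set.Ioo (0:ℝ) 1)
    (Yb : ℕ → Bool) (bb : (N : ℕ) → Fin N → Bool)
    (ρ : (N : ℕ) → Fin N → ℝ) (hρ : ∀ N i, ρ N i ∈ Set.Icc (0:ℝ) 1)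
    (hA : Tendsto (fun N : ℕ =>
      (∑ i ∈ Finset.range N, (if Yb i then (1:ℝ) else 0)) / N) atTop (nhds p₀))
    (hc : Tendsto (fun N : ℕ =>
      (∑ i : Fin N, (if bb N i then (0:ℝ) else 1)) / N) atTop (nhds 0)) :
    ∀ phat : ℕ → ℝ, (∀ N, phat N ∈ Set.Icc (0:ℝ) 1) →
      (∀ N, (∏ i : Fin N,
          (if bb N i then (if Yb i then phat N else 1 - phat N) else (1 - ρ N i * phat N)))
        = sSup ((fun p => ∏ i : Fin N,
          (if bb N i then (if Yb i then p else 1 - p) else (1 - ρ N i * p))) '' Set.Icc (0:ℝ) 1)) →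
      Tendsto phat atTop (nhds p₀) := by
  obtain ⟨hp0, hp1⟩ := hp₀
  set f : (N : ℕ) → Fin N → ℝ → ℝ :=
    fun N i p => if bb N i then (if Yb i then p else 1 - p) else (1 - ρ N i * p) with hf
  -- basic facts about the factors
  have haff : ∀ N (i : Fin N) (x y t : ℝ),
      f N i (t*x + (1-t)*y) = t * f N i x + (1-t) * f N i y := by
    intro N i x y t
    simp only [hf]
    split_ifs <;> ring
  have hnn : ∀ N (i : Fin N) p, p ∈ Set.Icc (0:ℝ) 1 → 0 ≤ f N i p := by
    intro N i p hp
    obtain ⟨h0, h1⟩ := hp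
    obtain ⟨hρ0, hρ1⟩ := hρ N i
    simp only [hf]
    split_ifs <;> nlinarith
  have hle1 : ∀ N (i : Fin N) p, p ∈ Set.Icc (0:ℝ) 1 → f N i p ≤ 1 := by
    intro N i p hp
    obtain ⟨h0, h1⟩ := hp
    obtain ⟨hρ0, hρ1⟩ := hρ N i
    simp only [hf]
    split_ifs <;> nlinarith
  have hpos : ∀ N (i : Fin N) p, p ∈ Set.Ioo (0:ℝ) 1 → 0 < f N i p := by
    intro N i p hp
    obtain ⟨h0, h1⟩ := hp
    obtain ⟨hρ0, hρ1⟩ := hρ N i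
    simp only [hf]
    split_ifs <;> nlinarith
  have hprodpos : ∀ N p, p ∈ Set.Ioo (0:ℝ) 1 → 0 < ∏ i : Fin N, f N i p :=
    fun N p hp => Finset.prod_pos (fun i _ => hpos N i p hp)
  -- Claim 1: for q ≠ p₀ in (0,1), eventually ∏ f N i q < ∏ f N i p₀
  have claim1 : ∀ q : ℝ, q ∈ Set.Ioo (0:ℝ) 1 → q ≠ p₀ →
      ∀ᶠ N in atTop, (∏ i : Fin N, f N i q) < ∏ i : Fin N, f N i p₀ := by
    intro q hq hqne
    obtain ⟨hq0, hq1⟩ := hq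
    set a : ℝ := Real.log q - Real.log p₀ with ha
    set B : ℝ := Real.log (1-q) - Real.log (1-p₀) with hB
    set C : ℝ := |a| + |B| + (-Real.log (1-q)) + (-Real.log (1-p₀)) with hC
    have h1q : (0:ℝ) < 1 - q := by linarith
    have h1p : (0:ℝ) < 1 - p₀ := by linarith
    have hM1 : (0:ℝ) ≤ -Real.log (1-q) := by
      have := Real.log_nonpos (le_of_lt h1q) (by linarith); linarith
    have hM2 : (0:ℝ) ≤ -Real.log (1-p₀) := by
      have := Real.log_nonpos (le_of_lt h1p) (by linarith); linarith
    have hCnn : 0 ≤ C := by positivity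
    set err : (N : ℕ) → Fin N → ℝ :=
      fun N i => (Real.log (f N i q) - Real.log (f N i p₀)) - (if Yb i then a else B) with herr
    have herr_bound : ∀ N (i : Fin N), |err N i| ≤ C * (if bb N i then (0:ℝ) else 1) := by
      intro N i
      obtain ⟨hρ0, hρ1⟩ := hρ N i
      by_cases hbi : bb N i
      · have : err N i = 0 := by
          simp only [herr, hf, hbi, if_true]
          by_cases hYi : Yb i <;> simp [hYi, ha, hB]
        simp [this, hbi]
      · have hfq : f N i q = 1 - ρ N i * q := by simp [hf, hbi]
        have hfp : f N i p₀ = 1 - ρ N i * p₀ := by simp [hf, hbi]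
        have hb1 : Real.log (1-q) ≤ Real.log (1 - ρ N i * q) :=
          Real.log_le_log h1q (by nlinarith)
        have hb2 : Real.log (1 - ρ N i * q) ≤ 0 :=
          Real.log_nonpos (by nlinarith) (by nlinarith)
        have hb3 : Real.log (1-p₀) ≤ Real.log (1 - ρ N i * p₀) :=
          Real.log_le_log h1p (by nlinarith)
        have hb4 : Real.log (1 - ρ N i * p₀) ≤ 0 :=
          Real.log_nonpos (by nlinarith) (by nlinarith)
        have hab : |(if Yb i then a else B)| ≤ |a| + |B| := by
          by_cases hYi : Yb i <;> simp [hYi] <;> positivity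
        rw [herr]
        simp only []
        rw [if_neg hbi, mul_one]
        calc |Real.log (f N i q) - Real.log (f N i p₀) - (if Yb i then a else B)|
            ≤ |Real.log (f N i q) - Real.log (f N i p₀)| + |(if Yb i then a else B)| :=
              abs_sub _ _
          _ ≤ (|Real.log (f N i q)| + |Real.log (f N i p₀)|) + (|a| + |B|) :=
              add_le_add (abs_sub _ _) hab
          _ ≤ ((-Real.log (1-q)) + (-Real.log (1-p₀))) + (|a| + |B|) := by
              apply add_le_add_left
              apply add_le_add
              · rw [hfq, abs_le]; constructor <;> linarith
              · rw [hfp, abs_le]; constructor <;> linarith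
          _ = C := by rw [hC]; ring
    set T : ℕ → ℝ := fun N => ∑ i ∈ Finset.range N, (if Yb i then (1:ℝ) else 0) with hT
    set D : ℕ → ℝ := fun N => ∑ i : Fin N, (Real.log (f N i q) - Real.log (f N i p₀)) with hD
    have hE1 : ∀ N, D N = a * T N + B * (N - T N) + ∑ i : Fin N, err N i := by
      intro N
      have key : ∀ i : Fin N, Real.log (f N i q) - Real.log (f N i p₀)
          = (a * (if Yb (i:ℕ) then (1:ℝ) else 0) + B * (1 - (if Yb (i:ℕ) then (1:ℝ) else 0)))
            + err N i := by
        intro i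
        rw [herr]
        by_cases hYi : Yb (i:ℕ) <;> simp [hYi] <;> ring
      have hTN : T N = ∑ i : Fin N, (if Yb (i:ℕ) then (1:ℝ) else 0) := by
        rw [hT]; exact (Fin.sum_univ_eq_sum_range _ N).symm
      rw [hD]
      simp only [key]
      rw [Finset.sum_add_distrib, Finset.sum_add_distrib, ← Finset.mul_sum, ← Finset.mul_sum,
        Finset.sum_sub_distrib, Finset.sum_const, Finset.card_univ, Fintype.card_fin, hTN]
      simp [nsmul_eq_mul]
    -- error term tends to 0
    have herr_tendsto : Tendsto (fun N => (∑ i : Fin N, err N i) / N) atTop (nhds 0) := by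
      apply squeeze_zero_norm'
        (a := fun N => C * ((∑ i : Fin N, (if bb N i then (0:ℝ) else 1)) / N))
      · filter_upwards [eventually_ge_atTop 1] with N hN
        have hNpos : (0:ℝ) < N := by exact_mod_cast hN
        rw [Real.norm_eq_abs, abs_div, abs_of_pos hNpos, ← mul_div_assoc]
        gcongr
        calc |∑ i : Fin N, err N i| ≤ ∑ i : Fin N, |err N i| :=
              Finset.abs_sum_le_sum_abs _ _
          _ ≤ ∑ i : Fin N, C * (if bb N i then (0:ℝ) else 1) :=
              Finset.sum_le_sum (fun i _ => herr_bound N i)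
          _ = C * ∑ i : Fin N, (if bb N i then (0:ℝ) else 1) := by rw [Finset.mul_sum]
      · have := hc.const_mul C
        simpa using this
    have hTA : Tendsto (fun N => T N / N) atTop (nhds p₀) := hA
    have hDlim : Tendsto (fun N => D N / N) atTop (nhds (a * p₀ + B * (1 - p₀))) := by
      have hmain : Tendsto (fun N => a * (T N / N) + B * (1 - T N / N)
          + (∑ i : Fin N, err N i) / N) atTop (nhds (a * p₀ + B * (1 - p₀) + 0)) := by
        exact (((hTA.const_mul a).add ((tendsto_const_nhds.sub hTA).const_mul B)).add herr_tendsto)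
      rw [add_zero] at hmain
      apply hmain.congr'
      filter_upwards [eventually_ge_atTop 1] with N hN
      have hNne : (N:ℝ) ≠ 0 := by positivity
      rw [hE1 N]
      field_simp
    have hneg : a * p₀ + B * (1 - p₀) < 0 := by
      have := gibbs_aux ⟨hp0, hp1⟩ ⟨hq0, hq1⟩ hqne
      rw [ha, hB]; linarith
    have hev : ∀ᶠ N in atTop, D N / N < 0 := (tendsto_order.1 hDlim).2 0 hneg
    filter_upwards [hev, eventually_ge_atTop 1] with N hDN hN1
    have hNpos : (0:ℝ) < N := by exact_mod_cast hN1
    have hDneg : D N < 0 := by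
      by_contra h
      push_neg at h
      exact absurd (div_nonneg h (le_of_lt hNpos)) (not_le.2 hDN)
    have hlogs : Real.log (∏ i : Fin N, f N i q) < Real.log (∏ i : Fin N, f N i p₀) := by
      rw [Real.log_prod (fun i _ => ne_of_gt (hpos N i q ⟨hq0, hq1⟩)),
        Real.log_prod (fun i _ => ne_of_gt (hpos N i p₀ ⟨hp0, hp1⟩))]
      have hsplit : D N = (∑ i : Fin N, Real.log (f N i q)) - ∑ i : Fin N, Real.log (f N i p₀) := by
        simp only [hD, Finset.sum_sub_distrib]
      linarith [hsplit ▸ hDneg]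
    exact (Real.log_lt_log_iff (hprodpos N q ⟨hq0, hq1⟩) (hprodpos N p₀ ⟨hp0, hp1⟩)).1 hlogs
  -- final assembly
  intro phat hphat hsup
  have hmax' : ∀ N, (∏ i : Fin N, f N i p₀) ≤ ∏ i : Fin N, f N i (phat N) := by
    intro N
    have hbdd : BddAbove ((fun p => ∏ i : Fin N, f N i p) '' Set.Icc (0:ℝ) 1) := by
      refine ⟨1, ?_⟩
      rintro x ⟨p, hp, rfl⟩
      exact Finset.prod_le_one (fun i _ => hnn N i p hp) (fun i _ => hle1 N i p hp)
    have h := le_csSup hbdd (Set.mem_image_of_mem _ ⟨le_of_lt hp0, le_of_lt hp1⟩)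
    rw [← hsup N] at h
    exact h
  rw [Metric.tendsto_atTop]
  intro ε hε
  set ε' : ℝ := min (ε/2) (min (p₀/2) ((1-p₀)/2)) with hε'def
  have hε'1 : ε' ≤ ε/2 := min_le_left _ _
  have hε'2 : ε' ≤ p₀/2 := le_trans (min_le_right _ _) (min_le_left _ _)
  have hε'3 : ε' ≤ (1-p₀)/2 := le_trans (min_le_right _ _) (min_le_right _ _)
  have hε'pos : 0 < ε' := lt_min (by linarith) (lt_min (by linarith) (by linarith))
  have h1 : p₀ + ε' ∈ Set.Ioo (0:ℝ) 1 := ⟨by linarith, by linarith⟩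
  have h2 : p₀ - ε' ∈ Set.Ioo (0:ℝ) 1 := ⟨by linarith, by linarith⟩
  obtain ⟨N₀, hN₀⟩ := eventually_atTop.1
    ((claim1 _ h1 (ne_of_gt (by linarith))).and (claim1 _ h2 (ne_of_lt (by linarith))))
  refine ⟨N₀, fun N hN => ?_⟩
  obtain ⟨hlt1, hlt2⟩ := hN₀ N hN
  rw [Real.dist_eq]
  have habs : |phat N - p₀| ≤ ε' := by
    rw [abs_le]
    constructor
    · by_contra h
      push_neg at h
      have hph : phat N < p₀ - ε' := by linarith
      have hd : 0 < p₀ - phat N := by linarith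
      have hdne : p₀ - phat N ≠ 0 := ne_of_gt hd
      set t := ((p₀ - ε') - phat N)/(p₀ - phat N) with htdef
      have htI : t ∈ Set.Icc (0:ℝ) 1 := ⟨div_nonneg (by linarith) (le_of_lt hd),
        (div_le_one hd).2 (by linarith)⟩
      have hcomb : t * p₀ + (1-t) * (phat N) = p₀ - ε' := by
        rw [htdef]
        field_simp
        ring
      have hmb := maximizer_between (f N) (haff N) (hnn N)
        ⟨le_of_lt hp0, le_of_lt hp1⟩ (hphat N) htI
        (hprodpos N p₀ ⟨hp0, hp1⟩) (hmax' N)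
      rw [hcomb] at hmb
      linarith
    · by_contra h
      push_neg at h
      have hph : p₀ + ε' < phat N := by linarith
      have hd : 0 < phat N - p₀ := by linarith
      have hdne : phat N - p₀ ≠ 0 := ne_of_gt hd
      set t := (phat N - (p₀ + ε'))/(phat N - p₀) with htdef
      have htI : t ∈ Set.Icc (0:ℝ) 1 := ⟨div_nonneg (by linarith) (le_of_lt hd),
        (div_le_one hd).2 (by linarith)⟩
      have hcomb : t * p₀ + (1-t) * (phat N) = p₀ + ε' := by
        rw [htdef]
        field_simp
        ring
      have hmb := maximizer_between (f N) (haff N) (hnn N)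
        ⟨le_of_lt hp0, le_of_lt hp1⟩ (hphat N) htI
        (hprodpos N p₀ ⟨hp0, hp1⟩) (hmax' N)
      rw [hcomb] at hmb
      linarith
  linarith


/-- Stochastic version of Lemma 5.1(2): almost-sure consistency of the maximum
likelihood estimator of the toxicity probability under the random survival
likelihood, for i.i.d. Bernoulli(p₀) outcomes with a vanishing fraction of
pending outcomes. -/
theorem stmt_7 {Ω : Type*} [MeasurableSpace Ω] (P : Measure Ω) [IsProbabilityMeasure P]
    (p₀ : ℝ) (hp₀ : p₀ ∈ Set.Ioo (0:ℝ) 1)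
    (Y : ℕ → Ω → Bool)
    (hY_meas : ∀ i, Measurable (Y i))
    (hY_indep : ProbabilityTheory.iIndepFun Y P)
    (hY_dist : ∀ i, P {ω | Y i ω = true} = ENNReal.ofReal p₀)
    (b : (N : ℕ) → Fin N → Ω → Bool)
    (hb_meas : ∀ N i, Measurable (b N i))
    (hb_pending : ∀ᵐ ω ∂P,
      Tendsto (fun N => (∑ i : Fin N, (if b N i ω then (0:ℝ) else 1)) / N)
        atTop (nhds 0))
    (ρ : (N : ℕ) → Fin N → ℝ) (hρ : ∀ N i, ρ N i ∈ Set.Icc (0:ℝ) 1)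
    (L : ℕ → ℝ → Ω → ℝ)
    (hL : ∀ N p ω, L N p ω =
      ∏ i : Fin N,
        (if b N i ω then (if Y i ω then p else 1 - p) else (1 - ρ N i * p))) :
    ∀ᵐ ω ∂P, ∀ phat : ℕ → ℝ,
      (∀ N, phat N ∈ Set.Icc (0:ℝ) 1) →
      (∀ N, L N (phat N) ω = sSup ((fun p => L N p ω) '' Set.Icc (0:ℝ) 1)) →
      Tendsto phat atTop (nhds p₀) := by
  classical
  set X : ℕ → Ω → ℝ := fun i ω => if Y i ω then 1 else 0 with hX
  have hmeas_set : ∀ i, MeasurableSet {ω | Y i ω = true} := by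
    intro i
    have : {ω | Y i ω = true} = Y i ⁻¹' {true} := by ext ω; simp
    rw [this]
    exact (hY_meas i) (measurableSet_singleton true)
  have hXind : ∀ i, X i = ({ω | Y i ω = true}).indicator (1 : Ω → ℝ) := by
    intro i
    funext ω
    rw [hX]
    by_cases h : Y i ω <;> simp [Set.indicator_apply, h]
  have hint : Integrable (X 0) P := by
    rw [hXind 0]
    exact (integrable_const (1:ℝ)).indicator (hmeas_set 0)
  have hXindep : Pairwise (Function.onFun (ProbabilityTheory.IndepFun · · P) X) := by
    intro i j hij
    exact (hY_indep.indepFun hij).comp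
      (Measurable.of_discrete (f := fun b : Bool => if b then (1:ℝ) else 0))
      (Measurable.of_discrete (f := fun b : Bool => if b then (1:ℝ) else 0))
  have hid : ∀ i, ProbabilityTheory.IdentDistrib (Y i) (Y 0) P P := by
    intro i
    refine ⟨(hY_meas i).aemeasurable, (hY_meas 0).aemeasurable, ?_⟩
    apply MeasureTheory.Measure.ext_of_singleton
    intro a
    have key : ∀ j, Measure.map (Y j) P {a} = P {ω | Y j ω = a} := by
      intro j
      rw [Measure.map_apply (hY_meas j) (measurableSet_singleton a)]
      congr 1
    cases a
    · have hcompl : ∀ j, {ω | Y j ω = false} = {ω | Y j ω = true}ᶜ := by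
        intro j; ext ω; simp
      rw [key i, key 0, hcompl i, hcompl 0,
        measure_compl (hmeas_set i) (measure_ne_top _ _),
        measure_compl (hmeas_set 0) (measure_ne_top _ _), hY_dist i, hY_dist 0]
    · rw [key i, key 0, hY_dist i, hY_dist 0]
  have hident : ∀ i, ProbabilityTheory.IdentDistrib (X i) (X 0) P P := by
    intro i
    exact (hid i).comp (Measurable.of_discrete (f := fun b : Bool => if b then (1:ℝ) else 0))
  have hmean : ∫ ω, X 0 ω ∂P = p₀ := by
    rw [hXind 0, integral_indicator_one (hmeas_set 0), measureReal_def, hY_dist 0,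
      ENNReal.toReal_ofReal (le_of_lt hp₀.1)]
  have hslln := ProbabilityTheory.strong_law_ae X hint hXindep hident
  filter_upwards [hslln, hb_pending] with ω hω1 hω2
  intro phat hphat hsup
  have hA : Tendsto (fun N : ℕ =>
      (∑ i ∈ Finset.range N, (if Y i ω then (1:ℝ) else 0)) / N) atTop (nhds p₀) := by
    have : (∫ x, X 0 x ∂P) = p₀ := hmean
    rw [this] at hω1
    apply hω1.congr
    intro n
    rw [smul_eq_mul, div_eq_inv_mul]
  have h2 := hsup
  simp only [hL] at h2
  exact det_consistency hp₀ (fun i => Y i ω) (fun N i => b N i ω) ρ hρ hA hω2 phat hphat h2
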